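/- Suppose θ > κ₂ > κ₁ ≥ ℵ₀ are cardinals with D(θ,κ₁,κ₂) = θ, and suppose that for every cardinal λ ≥ θ with cf(λ) = cf(κ₂) there exists a cardinal ν with κ₁ ≤ ν < κ₂ such that λ = sup{δ : δ < λ and D(δ,κ₁,ν) ≤ λ}. Then D(λ,κ₁,κ₂) = λ for every cardinal λ ≥ θ. -/

import Mathlib

open Cardinal

/-- A family `D` of subsets of `α` is dense in `[α]^{κ₂}`. -/
def IsDenseIn {α : Type u} (D : Set (Set α)) (κ₂ : Cardinal.{u}) : Prop :=
  ∀ Y : Set α, #Y = κ₂ → ∃ Z ∈ D, Z ⊆ Y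

/-- The density `D(λ,κ₁,κ₂)`. -/
noncomputable def Density (l κ₁ κ₂ : Cardinal.{u}) : Cardinal.{u} :=
  sInf { c : Cardinal.{u} | ∃ D : Set (Set l.out),
    (∀ X ∈ D, #X = κ₁) ∧ IsDenseIn D κ₂ ∧ c = #D }

namespace DensityProof

open Cardinal Set Ordinal

noncomputable instance wo (o : Ordinal.{u}) : IsWellOrder o.ToType (· < ·) := isWellOrder_lt

lemma density_le_of_family {α : Type u} {l κ₁ κ₂ : Cardinal.{u}} (hα : #α = l)
    (D : Set (Set α)) (h1 : ∀ X ∈ D, #X = κ₁)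
    (h2 : ∀ Y : Set α, #Y = κ₂ → ∃ Z ∈ D, Z ⊆ Y) :
    Density l κ₁ κ₂ ≤ #D := by
  have hout : #(l.out) = #α := by rw [mk_out, hα]
  obtain ⟨e⟩ := Cardinal.eq.1 hout
  have hinj : Function.Injective (fun Z : Set α => e ⁻¹' Z) := fun Z₁ Z₂ h => by
    simpa [Set.preimage_preimage, e.symm_comp_self] using congrArg (fun S => e.symm ⁻¹' S) h
  refine le_trans (csInf_le' ⟨(fun Z : Set α => e ⁻¹' Z) '' D, ?_, ?_, rfl⟩) ?_
  · rintro X ⟨Z, hZ, rfl⟩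
    show #(⇑e ⁻¹' Z) = κ₁
    rw [mk_preimage_equiv]
    exact h1 Z hZ
  · intro Y hY
    have : #(e '' Y) = κ₂ := by rw [mk_image_eq e.injective, hY]
    obtain ⟨Z, hZD, hZY⟩ := h2 _ this
    refine ⟨e ⁻¹' Z, ⟨Z, hZD, rfl⟩, ?_⟩
    intro x hx
    have := hZY hx
    simpa using this
  · rw [mk_image_eq hinj]

lemma exists_min_family (l κ₁ κ₂ : Cardinal.{u}) (h1 : κ₁ ≤ κ₂) :
    ∃ D : Set (Set l.out), (∀ X ∈ D, #X = κ₁) ∧ IsDenseIn D κ₂ ∧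
      #D = Density l κ₁ κ₂ := by
  have hne : { c : Cardinal.{u} | ∃ D : Set (Set l.out),
      (∀ X ∈ D, #X = κ₁) ∧ IsDenseIn D κ₂ ∧ c = #D }.Nonempty := by
    refine ⟨_, {Z : Set l.out | #Z = κ₁}, fun X hX => hX, ?_, rfl⟩
    intro Y hY
    obtain ⟨Z, hZY, hZ⟩ := le_mk_iff_exists_subset.1 (hY ▸ h1)
    exact ⟨Z, hZ, hZY⟩
  obtain ⟨D, hD1, hD2, hD3⟩ := csInf_mem hne
  exact ⟨D, hD1, hD2, hD3.symm⟩

lemma local_family {α : Type u} (A : Set α) (κ₁ τ : Cardinal.{u}) (h1 : κ₁ ≤ τ) :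
    ∃ F : Set (Set α), (∀ Z ∈ F, #Z = κ₁) ∧ #F ≤ Density (#A) κ₁ τ ∧
      ∀ Y : Set α, Y ⊆ A → #Y = τ → ∃ Z ∈ F, Z ⊆ Y := by
  obtain ⟨D, hD1, hD2, hD3⟩ := exists_min_family (#A) κ₁ τ h1
  have hout : #((#A).out) = #(A : Set α) := by rw [mk_out]
  obtain ⟨e⟩ := Cardinal.eq.1 hout
  set f : (#A).out → α := fun x => (e x : α) with hf
  have hfinj : Function.Injective f := fun a b h => e.injective (Subtype.val_injective h)
  refine ⟨(fun Z => f '' Z) '' D, ?_, ?_, ?_⟩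
  · rintro W ⟨Z, hZ, rfl⟩
    rw [mk_image_eq hfinj]
    exact hD1 Z hZ
  · rw [mk_image_eq (Set.image_injective.2 hfinj), hD3]
  · intro Y hYA hY
    have hYr : Y ⊆ Set.range f := by
      intro y hy
      exact ⟨e.symm ⟨y, hYA hy⟩, by simp [hf]⟩
    have hpre : #(f ⁻¹' Y) = τ := by
      rw [mk_preimage_of_injective_of_subset_range f Y hfinj hYr, hY]
    obtain ⟨Z, hZD, hZY⟩ := hD2 _ hpre
    exact ⟨f '' Z, ⟨Z, hZD, rfl⟩, (Set.image_mono hZY).trans (Set.image_preimage_subset f Y)⟩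
variable {lam : Cardinal.{0}}

noncomputable def tin (lam : Cardinal.{0}) (x : lam.ord.ToType) : Ordinal.{0} :=
  @typein _ (· < ·) (wo _) x

lemma tin_lt (x : lam.ord.ToType) : tin lam x < lam.ord := by
  have := typein_lt_type ((· < ·) : lam.ord.ToType → _ → Prop) x
  rw [type_toType] at this
  exact this

lemma tin_card_lt (x : lam.ord.ToType) : (tin lam x).card < lam := by
  rw [← Cardinal.lt_ord]; exact tin_lt x

lemma tin_lt_tin {x y : lam.ord.ToType} : tin lam x < tin lam y ↔ x < y :=
  typein_lt_typein _

lemma mk_Iio_eq (x : lam.ord.ToType) : #(Set.Iio x) = (tin lam x).card := by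
  have h := card_typein (r := ((· < ·) : lam.ord.ToType → _ → Prop)) x
  refine Eq.trans ?_ h
  exact Cardinal.mk_congr (Equiv.subtypeEquivRight (fun y => Iff.rfl))

lemma mk_Iic_le' (x : lam.ord.ToType) : #(Set.Iic x) ≤ (tin lam x).card + 1 := by
  rw [← Set.Iio_insert]
  refine le_trans mk_insert_le ?_
  rw [mk_Iio_eq]

lemma mk_Iic_lt (hlam : ℵ₀ ≤ lam) (x : lam.ord.ToType) : #(Set.Iic x) < lam :=
  lt_of_le_of_lt (mk_Iic_le' x)
    (Cardinal.add_lt_of_lt hlam (tin_card_lt x) (lt_of_lt_of_le one_lt_aleph0 hlam))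

lemma bdd_of_small {S : Set lam.ord.ToType} (h : #S < lam.ord.cof) :
    ∃ b, ∀ x ∈ S, x ≤ b := by
  by_contra hne
  push_neg at hne
  have hc : IsCofinal S := fun a => by obtain ⟨x, hx, hax⟩ := hne a; exact ⟨x, hx, hax.le⟩
  have := Order.cof_le hc
  rw [Ordinal.cof_toType] at this
  exact absurd h (not_lt.2 this)

lemma cof_le_unbdd {S : Set lam.ord.ToType} (h : ∀ a, ∃ x ∈ S, a ≤ x) :
    lam.ord.cof ≤ #S := by
  have := Order.cof_le (s := S) h
  rwa [Ordinal.cof_toType] at this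

lemma exists_unbdd (lam : Cardinal.{0}) :
    ∃ S : Set lam.ord.ToType, (∀ a, ∃ x ∈ S, a ≤ x) ∧ #S = lam.ord.cof := by
  obtain ⟨S, hS, hcard⟩ := Order.exists_cof_eq (α := lam.ord.ToType)
  rw [Ordinal.cof_toType] at hcard
  exact ⟨S, hS, hcard⟩

lemma cover_le {S : Set lam.ord.ToType} (hS : ∀ a, ∃ x ∈ S, a ≤ x) (Y : Set lam.ord.ToType) :
    #Y ≤ #S * ⨆ b : S, #(Y ∩ Set.Iic (b : lam.ord.ToType) : Set _) := by
  have hcov : Y = ⋃ b : S, (Y ∩ Set.Iic (b : lam.ord.ToType)) := by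
    apply Set.eq_of_subset_of_subset
    · intro y hy
      obtain ⟨x, hx, hyx⟩ := hS y
      exact Set.mem_iUnion.2 ⟨⟨x, hx⟩, hy, hyx⟩
    · exact Set.iUnion_subset fun b => Set.inter_subset_left
  calc #Y = #(⋃ b : S, (Y ∩ Set.Iic (b : lam.ord.ToType))) := by rw [← hcov]
    _ ≤ _ := mk_iUnion_le _

noncomputable def pt (lam : Cardinal.{0}) {δ : Cardinal.{0}} (h : δ < lam) : lam.ord.ToType :=
  @enum _ (· < ·) (wo _) ⟨δ.ord, by rw [type_toType]; exact Cardinal.ord_lt_ord.2 h⟩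

lemma tin_pt {δ : Cardinal.{0}} (h : δ < lam) : tin lam (pt lam h) = δ.ord :=
  typein_enum _ _

lemma lt_pt {δ : Cardinal.{0}} (h : δ < lam) {b : lam.ord.ToType}
    (hb : (tin lam b).card < δ) : b < pt lam h := by
  rw [← tin_lt_tin, tin_pt]
  exact Cardinal.lt_ord.2 hb

lemma mk_Iic_pt {δ : Cardinal.{0}} (h : δ < lam) (hδ : ℵ₀ ≤ δ) :
    #(Set.Iic (pt lam h)) = δ := by
  apply le_antisymm
  · refine (mk_Iic_le' _).trans ?_
    rw [tin_pt, card_ord]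
    rcases Cardinal.add_one_le_succ δ with _
    calc δ + 1 ≤ δ + ℵ₀ := by exact add_le_add_right (le_of_lt one_lt_aleph0) δ
      _ = δ := Cardinal.add_eq_left hδ hδ
  · rw [← Set.Iio_insert, mk_insert (by simp), mk_Iio_eq, tin_pt, card_ord]
    exact le_self_add

lemma tin_le_tin {x y : lam.ord.ToType} : tin lam x ≤ tin lam y ↔ x ≤ y := by
  rw [← not_lt, ← not_lt, not_iff_not]; exact tin_lt_tin

lemma mono_c {Y : Set lam.ord.ToType} {a b : lam.ord.ToType} (h : a ≤ b) :
    #(Y ∩ Set.Iic a : Set _) ≤ #(Y ∩ Set.Iic b : Set _) :=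
  mk_le_mk_of_subset (Set.inter_subset_inter_right _ (Set.Iic_subset_Iic.2 h))

lemma cof_eq_of_small (hlam : ℵ₀ ≤ lam) {κ₂ : Cardinal.{0}} (hκ₂ : ℵ₀ ≤ κ₂)
    {Y : Set lam.ord.ToType} (hY : #Y = κ₂)
    (hsm : ∀ b, #(Y ∩ Set.Iic b : Set _) < κ₂) : lam.ord.cof = κ₂.ord.cof := by
  haveI hne : Nonempty lam.ord.ToType := by
    rw [toType_nonempty_iff_ne_zero]
    simp only [ne_eq, Cardinal.ord_eq_zero]
    intro h
    rw [h] at hlam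
    simp only [le_zero_iff] at hlam
    exact aleph0_ne_zero hlam
  -- Y is unbounded
  have hYunb : ∀ a, ∃ y ∈ Y, a ≤ y := by
    intro a
    by_contra h
    push_neg at h
    have hsub : Y ⊆ Set.Iic a := fun y hy => (h y hy).le
    have : Y ∩ Set.Iic a = Y := Set.inter_eq_left.2 hsub
    exact absurd (this ▸ hsm a) (by rw [hY]; exact lt_irrefl _)
  have hcl2 : lam.ord.cof ≤ κ₂ := hY ▸ cof_le_unbdd hYunb
  obtain ⟨S, hS, hScard⟩ := exists_unbdd lam
  haveI hSne : Nonempty ↥S := by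
    obtain ⟨x, hx, -⟩ := hS (Classical.arbitrary _)
    exact ⟨⟨x, hx⟩⟩
  set c : lam.ord.ToType → Cardinal.{0} := fun b => #(Y ∩ Set.Iic b : Set _) with hc
  set s : Cardinal.{0} := ⨆ b : S, c ↑b with hs
  have hbdd : BddAbove (Set.range fun b : S => c ↑b) :=
    ⟨κ₂, by rintro _ ⟨b, rfl⟩; exact (hsm _).le⟩
  have hsκ : s ≤ κ₂ := ciSup_le' fun b => (hsm _).le
  have hκs : κ₂ ≤ lam.ord.cof * s := by
    rw [← hY, ← hScard]
    exact cover_le hS Y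
  rcases lt_or_eq_of_le hsκ with hlt | heq
  · -- s < κ₂ : then cof lam = κ₂ regular
    have hcof : lam.ord.cof = κ₂ := by
      rcases lt_or_eq_of_le hcl2 with h' | h'
      · exact absurd hκs (not_le.2 (Cardinal.mul_lt_of_lt hκ₂ h' hlt))
      · exact h'
    have hreg := Cardinal.isRegular_cof (Cardinal.isSuccLimit_ord hlam)
    rw [hcof] at hreg
    rw [hcof, hreg.cof_eq]
  · -- s = κ₂
    apply le_antisymm
    · -- lam.ord.cof ≤ κ₂.ord.cof
      obtain ⟨S₂, hS₂, hS₂card⟩ := exists_unbdd κ₂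
      have hch : ∀ k : ↥S₂, ∃ b : ↥S, (tin κ₂ ↑k).card < c ↑b := by
        intro k
        have h1 : (tin κ₂ ↑k).card < κ₂ := tin_card_lt _
        exact (lt_ciSup_iff hbdd).1 (h1.trans_le heq.ge)
      choose g hg using hch
      have hUunb : ∀ a, ∃ u ∈ Set.range (fun k : ↥S₂ => ((g k : ↥S) : lam.ord.ToType)), a ≤ u := by
        intro a
        have hca : c a < κ₂ := hsm a
        obtain ⟨k, hk, hxk⟩ := hS₂ (pt κ₂ hca)
        have h2 : (c a).ord ≤ tin κ₂ k := by
          rw [← tin_pt hca]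
          exact tin_le_tin.2 hxk
        have h3 : c a ≤ (tin κ₂ k).card := by
          have := Ordinal.card_le_card h2
          rwa [card_ord] at this
        have h4 : c a < c ↑(g ⟨k, hk⟩) := lt_of_le_of_lt h3 (hg ⟨k, hk⟩)
        refine ⟨_, ⟨⟨k, hk⟩, rfl⟩, ?_⟩
        by_contra hle
        push_neg at hle
        exact absurd (mono_c hle.le) (not_le.2 h4)
      have := cof_le_unbdd hUunb
      refine this.trans (le_trans mk_range_le ?_)
      rw [hS₂card]
    · -- κ₂.ord.cof ≤ lam.ord.cof
      have hord : κ₂.ord = ⨆ b : S, (c ↑b).ord := by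
        apply le_antisymm
        · apply le_of_forall_lt
          intro β hβ
          have hβc : β.card < κ₂ := Cardinal.lt_ord.1 hβ
          obtain ⟨b, hb⟩ := (lt_ciSup_iff hbdd).1 (hβc.trans_le heq.ge)
          exact lt_of_lt_of_le (Cardinal.lt_ord.2 hb) (le_ciSup (Ordinal.bddAbove_range _) b)
        · exact ciSup_le' fun b => (Cardinal.ord_lt_ord.2 (hsm _)).le
      have hlt' : ∀ b : ↥S, (c ↑b).ord < ⨆ b : S, (c ↑b).ord := by
        intro b
        rw [← hord]
        exact Cardinal.ord_lt_ord.2 (hsm _)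
      have := Ordinal.cof_iSup_le hlt'
      rw [← hord, hScard] at this
      exact this

lemma exists_ge_nu (hlam : ℵ₀ ≤ lam) {κ₂ ν : Cardinal.{0}} (hκ₂ : ℵ₀ ≤ κ₂) (hν : ν < κ₂)
    (hcof : lam.ord.cof = κ₂.ord.cof) {Y : Set lam.ord.ToType} (hY : #Y = κ₂) :
    ∃ b, ν ≤ #(Y ∩ Set.Iic b : Set _) := by
  by_contra h
  push_neg at h
  have hclκ : lam.ord.cof ≤ κ₂ := by rw [hcof]; exact Ordinal.cof_ord_le κ₂
  rcases lt_or_eq_of_le hclκ with hlt | heq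
  · obtain ⟨S, hS, hScard⟩ := exists_unbdd lam
    have h1 : κ₂ ≤ lam.ord.cof * ⨆ b : S, #(Y ∩ Set.Iic (b : lam.ord.ToType) : Set _) := by
      rw [← hY, ← hScard]
      exact cover_le hS Y
    have h2 : (⨆ b : S, #(Y ∩ Set.Iic (b : lam.ord.ToType) : Set _)) ≤ ν :=
      ciSup_le' fun b => (h _).le
    have h3 : lam.ord.cof * ⨆ b : S, #(Y ∩ Set.Iic (b : lam.ord.ToType) : Set _) < κ₂ :=
      Cardinal.mul_lt_of_lt hκ₂ hlt (lt_of_le_of_lt h2 hν)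
    exact absurd h1 (not_le.2 h3)
  · obtain ⟨S', hS'Y, hS'card⟩ := le_mk_iff_exists_subset.1 (hY ▸ hν.le : ν ≤ #Y)
    have hsmall : #S' < lam.ord.cof := by rw [hS'card, heq]; exact hν
    obtain ⟨b, hb⟩ := bdd_of_small hsmall
    refine absurd ?_ (not_le.2 (h b))
    rw [← hS'card]
    exact mk_le_mk_of_subset fun x hx => ⟨hS'Y hx, hb x hx⟩

lemma density_le_of_pieces {lam κ₁ κ₂ : Cardinal.{0}} (hlam : ℵ₀ ≤ lam)
    (Dfam : lam.ord.ToType → Set (Set lam.ord.ToType))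
    (hsz : ∀ b, ∀ Z ∈ Dfam b, #Z = κ₁)
    (hcard : ∀ b, #(Dfam b) ≤ lam)
    (hdense : ∀ Y : Set lam.ord.ToType, #Y = κ₂ → ∃ b, ∃ Z ∈ Dfam b, Z ⊆ Y) :
    Density lam κ₁ κ₂ ≤ lam := by
  have hα : #(lam.ord.ToType) = lam := by rw [mk_toType, card_ord]
  refine le_trans (density_le_of_family hα (⋃ b, Dfam b) ?_ ?_) ?_
  · intro X hX
    rw [Set.mem_iUnion] at hX
    obtain ⟨b, hb⟩ := hX
    exact hsz b X hb
  · intro Y hY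
    obtain ⟨b, Z, hZ, hZY⟩ := hdense Y hY
    exact ⟨Z, Set.mem_iUnion.2 ⟨b, hZ⟩, hZY⟩
  · refine le_trans (mk_iUnion_le _) ?_
    have h1 : (⨆ b, #(Dfam b)) ≤ lam := ciSup_le' hcard
    calc #(lam.ord.ToType) * ⨆ b, #(Dfam b) ≤ lam * lam := mul_le_mul' hα.le h1
      _ = lam := mul_eq_self hlam

lemma lam_le_density {lam κ₁ κ₂ : Cardinal.{0}} (hκ₁ : ℵ₀ ≤ κ₁) (h1 : κ₁ < lam)
    (h2 : κ₂ ≤ lam) (h12 : κ₁ ≤ κ₂) (hlam : ℵ₀ ≤ lam) : lam ≤ Density lam κ₁ κ₂ := by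
  obtain ⟨D, hD1, hD2, hD3⟩ := exists_min_family lam κ₁ κ₂ h12
  rw [← hD3]
  by_contra hcon
  push_neg at hcon
  have hU : #(⋃₀ D : Set lam.out) ≤ #D * κ₁ := by
    refine le_trans (mk_sUnion_le D) ?_
    exact mul_le_mul' le_rfl (ciSup_le' fun s => (hD1 _ s.2).le)
  have hUlt : #(⋃₀ D : Set lam.out) < lam :=
    lt_of_le_of_lt hU (Cardinal.mul_lt_of_lt hlam hcon h1)
  haveI : Infinite lam.out := by
    rw [← Cardinal.aleph0_le_mk_iff, mk_out]
    exact hlam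
  have hcompl : #((⋃₀ D)ᶜ : Set lam.out) = lam := by
    rw [mk_compl_of_infinite _ (by rwa [mk_out])]
    exact mk_out lam
  obtain ⟨Y, hYc, hY⟩ := le_mk_iff_exists_subset.1 (hcompl.symm ▸ h2 : κ₂ ≤ #((⋃₀ D)ᶜ : Set lam.out))
  obtain ⟨Z, hZD, hZY⟩ := hD2 Y hY
  have hZne : Z.Nonempty := by
    rw [← Set.nonempty_coe_sort, ← mk_ne_zero_iff, hD1 Z hZD]
    intro h
    rw [h] at hκ₁
    simp only [le_zero_iff] at hκ₁
    exact aleph0_ne_zero hκ₁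
  obtain ⟨z, hz⟩ := hZne
  exact hYc (hZY hz) (Set.mem_sUnion.2 ⟨Z, hZD, hz⟩)

end DensityProof

open DensityProof

theorem density_end_segment (θ κ₁ κ₂ : Cardinal.{0})
    (hκ₁ : ℵ₀ ≤ κ₁) (h12 : κ₁ < κ₂) (h2θ : κ₂ < θ)
    (hθ : Density θ κ₁ κ₂ = θ)
    (hsup : ∀ lam : Cardinal.{0}, θ ≤ lam → lam.ord.cof = κ₂.ord.cof →
      ∃ ν : Cardinal.{0}, κ₁ ≤ ν ∧ ν < κ₂ ∧
        lam = sSup { δ : Cardinal.{0} | δ < lam ∧ Density δ κ₁ ν ≤ lam }) :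
    ∀ lam : Cardinal.{0}, θ ≤ lam → Density lam κ₁ κ₂ = lam := by
  have hk2i : ℵ₀ ≤ κ₂ := hκ₁.trans h12.le
  have hthi : ℵ₀ ≤ θ := hk2i.trans h2θ.le
  have key : ∀ lam : Cardinal.{0}, θ ≤ lam → Density lam κ₁ κ₂ ≤ lam := by
    intro lam
    refine Cardinal.lt_wf.induction
      (C := fun lam => θ ≤ lam → Density lam κ₁ κ₂ ≤ lam) lam ?_
    clear lam
    intro lam IH hθlam
    rcases eq_or_lt_of_le hθlam with heq | hθlt
    · rw [← heq]
      exact le_of_eq hθ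
    · have hlami : ℵ₀ ≤ lam := hthi.trans hθlam
      by_cases hcof : lam.ord.cof = κ₂.ord.cof
      · -- cofinalities agree : use `hsup`
        obtain ⟨ν, hν1, hν2, hνsup⟩ := hsup lam hθlam hcof
        have hSne : {δ : Cardinal.{0} | δ < lam ∧ Density δ κ₁ ν ≤ lam}.Nonempty := by
          rcases Set.eq_empty_or_nonempty
            {δ : Cardinal.{0} | δ < lam ∧ Density δ κ₁ ν ≤ lam} with hS | hS
          · rw [hS, csSup_empty] at hνsup
            rw [hνsup] at hlami
            simp only [bot_eq_zero, le_zero_iff] at hlami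
            exact absurd hlami aleph0_ne_zero
          · exact hS
        have hSgt : ∀ c, c < lam → ∃ δ, (δ < lam ∧ Density δ κ₁ ν ≤ lam) ∧ c < δ := by
          intro c hc
          by_contra hcon
          push_neg at hcon
          have hle : sSup {δ : Cardinal.{0} | δ < lam ∧ Density δ κ₁ ν ≤ lam} ≤ c :=
            csSup_le hSne (fun δ hδ => hcon δ hδ)
          rw [← hνsup] at hle
          exact absurd (hle.trans_lt hc) (lt_irrefl lam)
        have hpieces : ∀ b : lam.ord.ToType, ∃ F : Set (Set lam.ord.ToType),
            (∀ Z ∈ F, #Z = κ₁) ∧ #F ≤ lam ∧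
            (Density (#(Set.Iic b)) κ₁ ν ≤ lam →
              ∀ Y : Set lam.ord.ToType, Y ⊆ Set.Iic b → #Y = ν → ∃ Z ∈ F, Z ⊆ Y) := by
          intro b
          by_cases hb : Density (#(Set.Iic b)) κ₁ ν ≤ lam
          · obtain ⟨F, hF1, hF2, hF3⟩ := local_family (Set.Iic b) κ₁ ν hν1
            exact ⟨F, hF1, hF2.trans hb, fun _ => hF3⟩
          · exact ⟨∅, by simp, by simp, fun h => absurd h hb⟩
        choose Dfam hD1 hD2 hD3 using hpieces
        apply density_le_of_pieces hlami Dfam hD1 hD2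
        intro Y hY
        obtain ⟨b₀, hb₀⟩ := exists_ge_nu hlami hk2i hν2 hcof hY
        have hc' : max (tin lam b₀).card θ < lam := max_lt (tin_card_lt b₀) hθlt
        obtain ⟨δ, ⟨hδlam, hδD⟩, hδgt⟩ := hSgt _ hc'
        have hdeltai : ℵ₀ ≤ δ := hthi.trans ((le_max_right _ _).trans hδgt.le)
        have hb₀b' : b₀ < pt lam hδlam :=
          lt_pt hδlam (lt_of_le_of_lt (le_max_left _ _) hδgt)
        have hIic : #(Set.Iic (pt lam hδlam)) = δ := mk_Iic_pt hδlam hdeltai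
        have hνle : ν ≤ #(Y ∩ Set.Iic (pt lam hδlam) : Set _) :=
          hb₀.trans (mono_c hb₀b'.le)
        obtain ⟨Y', hY'sub, hY'card⟩ := le_mk_iff_exists_subset.1 hνle
        obtain ⟨Z, hZF, hZY'⟩ := hD3 (pt lam hδlam) (by rw [hIic]; exact hδD) Y'
          (hY'sub.trans Set.inter_subset_right) hY'card
        exact ⟨pt lam hδlam, Z, hZF, hZY'.trans (hY'sub.trans Set.inter_subset_left)⟩
      · -- cofinalities disagree : every κ₂-set is bounded
        have hpieces : ∀ b : lam.ord.ToType, ∃ F : Set (Set lam.ord.ToType),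
            (∀ Z ∈ F, #Z = κ₁) ∧ #F ≤ lam ∧
            (θ ≤ #(Set.Iic b) →
              ∀ Y : Set lam.ord.ToType, Y ⊆ Set.Iic b → #Y = κ₂ → ∃ Z ∈ F, Z ⊆ Y) := by
          intro b
          by_cases hb : θ ≤ #(Set.Iic b)
          · obtain ⟨F, hF1, hF2, hF3⟩ := local_family (Set.Iic b) κ₁ κ₂ h12.le
            refine ⟨F, hF1, ?_, fun _ => hF3⟩
            exact hF2.trans ((IH _ (mk_Iic_lt hlami b) hb).trans (mk_Iic_lt hlami b).le)
          · exact ⟨∅, by simp, by simp, fun h => absurd h hb⟩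
        choose Dfam hD1 hD2 hD3 using hpieces
        apply density_le_of_pieces hlami Dfam hD1 hD2
        intro Y hY
        have hex : ∃ b, #(Y ∩ Set.Iic b : Set _) = κ₂ := by
          by_contra hcon
          push_neg at hcon
          refine hcof (cof_eq_of_small hlami hk2i hY fun b => ?_)
          exact lt_of_le_of_ne ((mk_le_mk_of_subset Set.inter_subset_left).trans hY.le) (hcon b)
        obtain ⟨b, hb⟩ := hex
        have hθb' : θ ≤ #(Set.Iic (max b (pt lam hθlt))) := by
          have h := mk_le_mk_of_subset (Set.Iic_subset_Iic.2 (le_max_right b (pt lam hθlt)))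
          rwa [mk_Iic_pt hθlt hthi] at h
        have hYb' : #(Y ∩ Set.Iic (max b (pt lam hθlt)) : Set _) = κ₂ :=
          le_antisymm ((mk_le_mk_of_subset Set.inter_subset_left).trans hY.le)
            (hb ▸ mono_c (le_max_left _ _))
        obtain ⟨Z, hZF, hZsub⟩ := hD3 (max b (pt lam hθlt)) hθb'
          (Y ∩ Set.Iic (max b (pt lam hθlt))) Set.inter_subset_right hYb'
        exact ⟨max b (pt lam hθlt), Z, hZF, hZsub.trans Set.inter_subset_left⟩
  intro lam hθlam
  have h1 : κ₁ < lam := h12.trans (h2θ.trans_le hθlam)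
  exact le_antisymm (key lam hθlam)
    (lam_le_density hκ₁ h1 (h2θ.le.trans hθlam) h12.le (hthi.trans hθlam))
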